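/- Let d ≥ 1, let 0 < r < π/4, let p₀ ∈ S^d, n ≥ 1, and ε > 0, and set σ = (4r/(nε))·(2 − 2r·cot(2r)). Let μ be the surface (spherical) measure on S^d restricted to the geodesic ball B_r(p₀). For a dataset D = {x₁,…,xₙ} ⊂ B_r(p₀) define g_D(x) = ‖(1/n)·Σ_{i=1}^{n} log_x x_i‖ for x ∈ B_r(p₀). Then for any two datasets D, D' ⊂ B_r(p₀) differing in exactly one element, and any measurable S ⊆ B_r(p₀): (∫_S e^{−g_D/σ} dμ)/(∫_{B_r(p₀)} e^{−g_D/σ} dμ) ≤ e^ε · (∫_S e^{−g_{D'}/σ} dμ)/(∫_{B_r(p₀)} e^{−g_{D'}/σ} dμ). -/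

import Mathlib

open MeasureTheory

/-- Geodesic distance on the unit sphere `S^d ⊂ ℝ^(d+1)`: `ρ(p,q) = arccos ⟨p,q⟩`. -/
noncomputable def sphDist {d : ℕ} (p q : EuclideanSpace ℝ (Fin (d + 1))) : ℝ :=
  Real.arccos (inner ℝ p q)

/-- Inverse exponential (log) map on the unit sphere:
`log_p q = (θ / sin θ) (q - cos θ • p)` with `θ = ρ(p,q)` (and `log_p p = 0`). -/
noncomputable def sphLog {d : ℕ} (p q : EuclideanSpace ℝ (Fin (d + 1))) :
    EuclideanSpace ℝ (Fin (d + 1)) :=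
  (sphDist p q / Real.sin (sphDist p q)) • (q - Real.cos (sphDist p q) • p)

/-- The unit sphere `S^d` as a subtype of `ℝ^(d+1)`. -/
abbrev Sph (d : ℕ) := Metric.sphere (0 : EuclideanSpace ℝ (Fin (d + 1))) 1

open Real

/-- `x cos x < sin x` on `(0, π/2)`. -/
lemma mul_cos_lt_sin {x : ℝ} (h0 : 0 < x) (h2 : x < π / 2) : x * Real.cos x < Real.sin x := by
  have hc : 0 < Real.cos x := Real.cos_pos_of_mem_Ioo ⟨by linarith [Real.pi_pos], h2⟩
  have := Real.lt_tan h0 h2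
  rw [Real.tan_eq_sin_div_cos, lt_div_iff₀ hc] at this
  linarith

/-- arccos is antitone. -/
lemma arccos_le_arccos' {x y : ℝ} (h : x ≤ y) : Real.arccos y ≤ Real.arccos x := by
  rw [Real.arccos_eq_pi_div_two_sub_arcsin, Real.arccos_eq_pi_div_two_sub_arcsin]
  have := Real.monotone_arcsin h
  linarith

set_option maxHeartbeats 1000000 in
/-- Key analytic comparison: the flat law-of-cosines side is bounded by `K` times
the spherical side. -/
lemma key_ineq {K a b t : ℝ} (ha : 0 < a) (ha2 : a < π / 2) (hb : 0 < b) (hb2 : b < π / 2)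
    (ht : t ∈ Set.Icc (-1 : ℝ) 1)
    (hK : a / Real.sin a * (b / Real.sin b) ≤ K ^ 2) (hK1 : 1 ≤ K) :
    a ^ 2 + b ^ 2 - 2 * a * b * t ≤
      K ^ 2 * Real.arccos (Real.cos a * Real.cos b + Real.sin a * Real.sin b * t) ^ 2 := by
  have hπ := Real.pi_pos
  have hsa : 0 < Real.sin a := Real.sin_pos_of_pos_of_lt_pi ha (by linarith)
  have hsb : 0 < Real.sin b := Real.sin_pos_of_pos_of_lt_pi hb (by linarith)
  set c : ℝ := Real.cos a * Real.cos b with hc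
  set s : ℝ := Real.sin a * Real.sin b with hs
  have hs0 : 0 < s := mul_pos hsa hsb
  have hab : a * b ≤ K ^ 2 * s := by
    have := hK
    rw [div_mul_div_comm, div_le_iff₀ hs0] at this
    linarith
  -- bounds on c + s * u for u in the open interval
  have hcs1 : c + s ≤ 1 := by
    have h := Real.cos_le_one (a - b); rw [Real.cos_sub] at h; rw [hc, hs]; linarith
  have hcs2 : -1 ≤ c - s := by
    have h := Real.neg_one_le_cos (a + b); rw [Real.cos_add] at h; rw [hc, hs]; linarith
  set Q : ℝ → ℝ := fun u => K ^ 2 * Real.arccos (c + s * u) ^ 2 - (a ^ 2 + b ^ 2 - 2 * a * b * u)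
    with hQ
  have hg : ∀ u ∈ Set.Ioo (-1 : ℝ) 1, -1 < c + s * u ∧ c + s * u < 1 := by
    intro u hu
    constructor
    · nlinarith [hu.1, hu.2]
    · nlinarith [hu.1, hu.2]
  have hderiv : ∀ u ∈ Set.Ioo (-1 : ℝ) 1,
      HasDerivAt Q (K ^ 2 * (2 * Real.arccos (c + s * u) *
        (-(1 / Real.sqrt (1 - (c + s * u) ^ 2)) * s)) + 2 * a * b) u := by
    intro u hu
    obtain ⟨hg1, hg2⟩ := hg u hu
    have h1 : HasDerivAt (fun v : ℝ => c + s * v) s u := by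
      simpa using ((hasDerivAt_id u).const_mul s).const_add c
    have h2 : HasDerivAt Real.arccos (-(1 / Real.sqrt (1 - (c + s * u) ^ 2))) (c + s * u) :=
      Real.hasDerivAt_arccos (by linarith) (by linarith)
    have h3 := (h2.comp u h1)
    have h4 : HasDerivAt (fun v : ℝ => Real.arccos (c + s * v) ^ 2)
        (2 * Real.arccos (c + s * u) * (-(1 / Real.sqrt (1 - (c + s * u) ^ 2)) * s)) u := by
      have := h3.pow 2
      exact this.congr_deriv (by norm_num [Function.comp_apply])
    have h5 : HasDerivAt (fun v : ℝ => a ^ 2 + b ^ 2 - 2 * a * b * v) (-(2 * a * b)) u := by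
      simpa using (((hasDerivAt_id u).const_mul (2 * a * b)).const_sub (a ^ 2 + b ^ 2))
    have h6 := (h4.const_mul (K ^ 2)).sub h5
    exact h6.congr_deriv (by ring)
  have hQanti : AntitoneOn Q (Set.Icc (-1 : ℝ) 1) := by
    apply antitoneOn_of_deriv_nonpos (convex_Icc _ _)
    · have : Continuous Q := by
        apply Continuous.sub
        · exact continuous_const.mul
            ((Real.continuous_arccos.comp (continuous_const.add
              (continuous_const.mul continuous_id))).pow 2)
        · exact continuous_const.sub (continuous_const.mul continuous_id)
      exact this.continuousOn
    · rw [interior_Icc]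
      intro u hu
      exact (hderiv u hu).differentiableAt.differentiableWithinAt
    · rw [interior_Icc]
      intro u hu
      rw [(hderiv u hu).deriv]
      obtain ⟨hg1, hg2⟩ := hg u hu
      set g : ℝ := c + s * u with hgdef
      set φ : ℝ := Real.arccos g with hφdef
      set D : ℝ := Real.sqrt (1 - g ^ 2) with hD
      have hφpos : 0 < φ := Real.arccos_pos.2 hg2
      have hDpos : 0 < D := Real.sqrt_pos.2 (by nlinarith)
      have hDφ : D ≤ φ := by
        have h1 : Real.sin φ = D := by rw [hφdef, hD, Real.sin_arccos]
        have := Real.sin_lt hφpos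
        linarith
      have hI : (0 : ℝ) < 1 / D := by positivity
      have hDI : D * (1 / D) = 1 := mul_one_div_cancel hDpos.ne'
      have h6 : a * b * D ≤ K ^ 2 * φ * s := by
        have h8 : a * b * D ≤ K ^ 2 * s * φ :=
          mul_le_mul hab hDφ hDpos.le (by positivity)
        nlinarith [h8]
      have h7 : a * b ≤ K ^ 2 * φ * s * (1 / D) := by
        have := mul_le_mul_of_nonneg_right h6 hI.le
        calc a * b = a * b * D * (1 / D) := by rw [mul_assoc, hDI, mul_one]
          _ ≤ K ^ 2 * φ * s * (1 / D) := this
      nlinarith [h7]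
  have h1mem : (1 : ℝ) ∈ Set.Icc (-1 : ℝ) 1 := by constructor <;> norm_num
  have hQ1 : 0 ≤ Q 1 := by
    have hcs : c + s = Real.cos (a - b) := by
      rw [hc, hs, Real.cos_sub]
    have habs : Real.arccos (c + s) = |a - b| := by
      rw [hcs, ← Real.cos_abs, Real.arccos_cos (abs_nonneg _)
        (by rw [abs_le]; constructor <;> linarith)]
    have hQ1eq : Q 1 = K ^ 2 * |a - b| ^ 2 - (a ^ 2 + b ^ 2 - 2 * a * b) := by
      simp only [hQ, mul_one]
      rw [habs]
    have hK2 : (1 : ℝ) ≤ K ^ 2 := by nlinarith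
    rw [hQ1eq, sq_abs]
    nlinarith [mul_nonneg (sub_nonneg.2 hK2) (sq_nonneg (a - b)), sq_nonneg (a - b)]
  have hfin : Q 1 ≤ Q t := hQanti ht h1mem ht.2
  have : 0 ≤ Q t := le_trans hQ1 hfin
  rw [hQ] at this
  simp only at this
  linarith

section Geometry

variable {F : Type*} [NormedAddCommGroup F] [InnerProductSpace ℝ F]

/-- Triangle inequality for the angular metric on the unit sphere of a real
inner ℝ product space. -/
lemma arccos_inner_triangle {x y z : F} (hx : ‖x‖ = 1) (hy : ‖y‖ = 1) (hz : ‖z‖ = 1) :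
    Real.arccos (inner ℝ x z : ℝ) ≤
      Real.arccos (inner ℝ x y : ℝ) + Real.arccos (inner ℝ y z : ℝ) := by
  set p : ℝ := inner ℝ x y with hp
  set q : ℝ := inner ℝ y z with hq
  set w : ℝ := inner ℝ x z with hw
  have hp1 : |p| ≤ 1 := by
    have := abs_real_inner_le_norm x y; rwa [hx, hy, mul_one] at this
  have hq1 : |q| ≤ 1 := by
    have := abs_real_inner_le_norm y z; rwa [hy, hz, mul_one] at this
  have hw1 : |w| ≤ 1 := by
    have := abs_real_inner_le_norm x z; rwa [hx, hz, mul_one] at this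
  rw [abs_le] at hp1 hq1 hw1
  by_cases hπ : π ≤ Real.arccos p + Real.arccos q
  · exact le_trans (Real.arccos_le_pi w) hπ
  push_neg at hπ
  have hzy : (inner ℝ z y : ℝ) = q := by rw [hq]; exact (real_inner_comm z y).symm
  have hxy : (inner ℝ x y : ℝ) = p := hp.symm
  have hnormu : ‖x - p • y‖ ^ 2 = 1 - p ^ 2 := by
    rw [norm_sub_sq_real, real_inner_smul_right, hxy, norm_smul, hx, hy]
    simp [Real.norm_eq_abs, sq_abs]
    ring
  have hnormv : ‖z - q • y‖ ^ 2 = 1 - q ^ 2 := by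
    rw [norm_sub_sq_real, real_inner_smul_right, hzy, norm_smul, hz, hy]
    simp [Real.norm_eq_abs, sq_abs]
    ring
  have hinneruv : (inner ℝ (x - p • y) (z - q • y) : ℝ) = w - p * q := by
    simp only [inner_sub_left, inner_sub_right, real_inner_smul_left, real_inner_smul_right,
      real_inner_self_eq_norm_sq, hy]
    rw [hxy, ← hw, hq]
    ring
  have hCS := abs_real_inner_le_norm (x - p • y) (z - q • y)
  rw [hinneruv] at hCS
  have hnu : ‖x - p • y‖ = Real.sqrt (1 - p ^ 2) := by
    rw [← hnormu, Real.sqrt_sq (norm_nonneg _)]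
  have hnv : ‖z - q • y‖ = Real.sqrt (1 - q ^ 2) := by
    rw [← hnormv, Real.sqrt_sq (norm_nonneg _)]
  rw [hnu, hnv] at hCS
  have hkey : Real.cos (Real.arccos p + Real.arccos q) ≤ w := by
    rw [Real.cos_add, Real.cos_arccos hp1.1 hp1.2, Real.cos_arccos hq1.1 hq1.2,
      Real.sin_arccos, Real.sin_arccos]
    have := abs_le.1 hCS
    linarith [this.1]
  calc Real.arccos w ≤ Real.arccos (Real.cos (Real.arccos p + Real.arccos q)) :=
        arccos_le_arccos' hkey
    _ = Real.arccos p + Real.arccos q := by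
        rw [Real.arccos_cos (add_nonneg (Real.arccos_nonneg _) (Real.arccos_nonneg _)) hπ.le]

end Geometry

/-- Concavity of sin: `a * sin R ≤ R * sin a` for `0 ≤ a ≤ R ≤ π`. -/
lemma mul_sin_le_aux {a R : ℝ} (ha : 0 ≤ a) (haR : a ≤ R) (hRπ : R ≤ π) :
    a * Real.sin R ≤ R * Real.sin a := by
  rcases eq_or_lt_of_le ha with h0 | ha0
  · rw [← h0]; simp
  have hR0 : 0 < R := lt_of_lt_of_le ha0 haR
  have ht1 : (0 : ℝ) ≤ a / R := by positivity
  have ht2 : (0 : ℝ) ≤ 1 - a / R := by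
    rw [sub_nonneg]; exact div_le_one_of_le₀ haR hR0.le
  have ht3 : a / R + (1 - a / R) = 1 := by ring
  have hconc := strictConcaveOn_sin_Icc.concaveOn.2
    (Set.mem_Icc.2 ⟨le_of_lt hR0, hRπ⟩) (Set.mem_Icc.2 ⟨le_refl 0, Real.pi_pos.le⟩)
    ht1 ht2 ht3
  have h1 : (a / R) • R + (1 - a / R) • (0 : ℝ) = a := by
    rw [smul_eq_mul, smul_eq_mul, mul_zero, add_zero, div_mul_cancel₀ _ hR0.ne']
  rw [h1, Real.sin_zero, smul_eq_mul, smul_eq_mul, mul_zero, add_zero] at hconc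
  have h2 := mul_le_mul_of_nonneg_left hconc hR0.le
  rw [← mul_assoc, mul_div_cancel₀ _ hR0.ne'] at h2
  linarith

section SphereLemmas

variable {d : ℕ}

local notation "E" => EuclideanSpace ℝ (Fin (d + 1))

lemma sphDist_comm (p q : E) : sphDist p q = sphDist q p := by
  rw [sphDist, sphDist, real_inner_comm]

lemma sphDist_nonneg (p q : E) : 0 ≤ sphDist p q := Real.arccos_nonneg _

lemma inner_le_one {p q : E} (hp : ‖p‖ = 1) (hq : ‖q‖ = 1) : |(inner ℝ p q : ℝ)| ≤ 1 := by
  have := abs_real_inner_le_norm p q; rwa [hp, hq, mul_one] at this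

lemma cos_sphDist {p q : E} (hp : ‖p‖ = 1) (hq : ‖q‖ = 1) :
    Real.cos (sphDist p q) = inner ℝ p q := by
  have h := abs_le.1 (inner_le_one hp hq)
  exact Real.cos_arccos h.1 h.2

lemma eq_of_inner_eq_one {p q : E} (hp : ‖p‖ = 1) (hq : ‖q‖ = 1)
    (h : (inner ℝ p q : ℝ) = 1) : q = p := by
  have h2 : ‖p - q‖ ^ 2 = 0 := by
    rw [norm_sub_sq_real, hp, hq, h]; ring
  have h3 : ‖p - q‖ = 0 := by
    have := sq_eq_zero_iff.1 h2; exact this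
  have := norm_sub_eq_zero_iff.1 h3
  exact this.symm

lemma sphLog_self (p : E) (hp : ‖p‖ = 1) : sphLog p p = 0 := by
  have h1 : (inner ℝ p p : ℝ) = 1 := by
    rw [real_inner_self_eq_norm_sq, hp]; norm_num
  rw [sphLog, sphDist, h1, Real.arccos_one]
  simp

lemma norm_orth {p q : E} (hp : ‖p‖ = 1) (hq : ‖q‖ = 1) :
    ‖q - Real.cos (sphDist p q) • p‖ = Real.sin (sphDist p q) := by
  have h := abs_le.1 (inner_le_one hp hq)
  have hcos := cos_sphDist hp hq
  have hsin : Real.sin (sphDist p q) = Real.sqrt (1 - (inner ℝ p q : ℝ) ^ 2) := by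
    rw [sphDist, Real.sin_arccos]
  have h2 : ‖q - Real.cos (sphDist p q) • p‖ ^ 2 = 1 - (inner ℝ p q : ℝ) ^ 2 := by
    rw [norm_sub_sq_real, real_inner_smul_right, norm_smul, hp, hq, hcos,
      real_inner_comm q p]
    simp [Real.norm_eq_abs, sq_abs]
    ring
  rw [← Real.sqrt_sq (norm_nonneg _), h2, hsin]

lemma norm_sphLog {p q : E} (hp : ‖p‖ = 1) (hq : ‖q‖ = 1) (h : sphDist p q < π) :
    ‖sphLog p q‖ = sphDist p q := by
  by_cases h1 : (inner ℝ p q : ℝ) = 1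
  · have hqp := eq_of_inner_eq_one hp hq h1
    have h2 : (inner ℝ p p : ℝ) = 1 := by
      rw [real_inner_self_eq_norm_sq, hp]; norm_num
    rw [hqp, sphLog_self p hp, norm_zero, sphDist, h2, Real.arccos_one]
  · have hb := abs_le.1 (inner_le_one hp hq)
    have hlt : (inner ℝ p q : ℝ) < 1 := lt_of_le_of_ne hb.2 h1
    have hgt : -1 < (inner ℝ p q : ℝ) := by
      rcases eq_or_lt_of_le hb.1 with h2 | h2
      · exfalso; rw [sphDist, ← h2, Real.arccos_neg_one] at h; exact lt_irrefl _ h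
      · exact h2
    have hθpos : 0 < sphDist p q := Real.arccos_pos.2 hlt
    have hsin : 0 < Real.sin (sphDist p q) := Real.sin_pos_of_pos_of_lt_pi hθpos h
    rw [sphLog, norm_smul, norm_orth hp hq, Real.norm_eq_abs,
      abs_of_nonneg (by positivity), div_mul_cancel₀ _ hsin.ne']

end SphereLemmas

section Sensitivity

variable {d : ℕ}

local notation "E" => EuclideanSpace ℝ (Fin (d + 1))

/-- The constant `K = 2 - 2r cot(2r)` is at least `1` for `0 < r < π/4`. -/
lemma one_le_K {r : ℝ} (hr0 : 0 < r) (hr : r < π / 4) :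
    1 ≤ 2 - 2 * r * (Real.cos (2 * r) / Real.sin (2 * r)) := by
  have h2r : 0 < 2 * r := by linarith
  have h2r2 : 2 * r < π / 2 := by linarith
  have hs : 0 < Real.sin (2 * r) :=
    Real.sin_pos_of_pos_of_lt_pi h2r (by linarith [Real.pi_pos])
  have h := mul_cos_lt_sin h2r h2r2
  have : 2 * r * (Real.cos (2 * r) / Real.sin (2 * r)) ≤ 1 := by
    rw [mul_div_assoc', div_le_one hs]; linarith
  linarith

/-- `2r / sin 2r ≤ K`. -/
lemma f_le_K {r : ℝ} (hr0 : 0 < r) (hr : r < π / 4) :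
    2 * r / Real.sin (2 * r) ≤ 2 - 2 * r * (Real.cos (2 * r) / Real.sin (2 * r)) := by
  have h2r : 0 < 2 * r := by linarith
  have h2r2 : 2 * r < π / 2 := by linarith
  have hs : 0 < Real.sin (2 * r) :=
    Real.sin_pos_of_pos_of_lt_pi h2r (by linarith [Real.pi_pos])
  have htr : r * Real.cos r < Real.sin r := mul_cos_lt_sin hr0 (by linarith [Real.pi_pos])
  have hcr : 0 < Real.cos r :=
    Real.cos_pos_of_mem_Ioo ⟨by linarith [Real.pi_pos], by linarith [Real.pi_pos]⟩
  rw [div_le_iff₀ hs]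
  have hexp : (2 - 2 * r * (Real.cos (2 * r) / Real.sin (2 * r))) * Real.sin (2 * r)
      = 2 * Real.sin (2 * r) - 2 * r * Real.cos (2 * r) := by
    field_simp
  rw [hexp, Real.sin_two_mul, Real.cos_two_mul]
  nlinarith [htr, hcr]

set_option maxHeartbeats 1600000 in
/-- Sensitivity bound: for `x, y, y'` pairwise within geodesic distance `2r` on the unit
sphere, `‖log_x y - log_x y'‖ ≤ 2r(2 - 2r cot 2r)`. -/
lemma sphLog_sub_bound {r : ℝ} (hr0 : 0 < r) (hr : r < π / 4) {x y y' : E}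
    (hx : ‖x‖ = 1) (hy : ‖y‖ = 1) (hy' : ‖y'‖ = 1)
    (hxy : sphDist x y < 2 * r) (hxy' : sphDist x y' < 2 * r)
    (hyy' : sphDist y y' < 2 * r) :
    ‖sphLog x y - sphLog x y'‖ ≤
      2 * r * (2 - 2 * r * (Real.cos (2 * r) / Real.sin (2 * r))) := by
  have hπ := Real.pi_pos
  set K : ℝ := 2 - 2 * r * (Real.cos (2 * r) / Real.sin (2 * r)) with hKdef
  have hK1 : 1 ≤ K := one_le_K hr0 hr
  have h2r2 : 2 * r < π / 2 := by linarith
  have hs2 : 0 < Real.sin (2 * r) :=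
    Real.sin_pos_of_pos_of_lt_pi (by linarith) (by linarith)
  -- degenerate cases
  by_cases hix : (inner ℝ x y : ℝ) = 1
  · have hyx := eq_of_inner_eq_one hx hy hix
    rw [hyx, sphLog_self x hx, zero_sub, norm_neg,
      norm_sphLog hx hy' (by linarith)]
    nlinarith [sphDist_nonneg x y', hxy']
  by_cases hix' : (inner ℝ x y' : ℝ) = 1
  · have hyx := eq_of_inner_eq_one hx hy' hix'
    rw [hyx, sphLog_self x hx, sub_zero, norm_sphLog hx hy (by linarith)]
    nlinarith [sphDist_nonneg x y, hxy]
  set a : ℝ := sphDist x y with hadef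
  set b : ℝ := sphDist x y' with hbdef
  have ha0 : 0 < a := Real.arccos_pos.2 (lt_of_le_of_ne (abs_le.1 (inner_le_one hx hy)).2 hix)
  have hb0 : 0 < b := Real.arccos_pos.2 (lt_of_le_of_ne (abs_le.1 (inner_le_one hx hy')).2 hix')
  have ha2 : a < π / 2 := by linarith
  have hb2 : b < π / 2 := by linarith
  have hsa : 0 < Real.sin a := Real.sin_pos_of_pos_of_lt_pi ha0 (by linarith)
  have hsb : 0 < Real.sin b := Real.sin_pos_of_pos_of_lt_pi hb0 (by linarith)
  have hca : Real.cos a = inner ℝ x y := cos_sphDist hx hy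
  have hcb : Real.cos b = inner ℝ x y' := cos_sphDist hx hy'
  set u : E := y - Real.cos a • x with hudef
  set v : E := y' - Real.cos b • x with hvdef
  have hun : ‖u‖ = Real.sin a := norm_orth hx hy
  have hvn : ‖v‖ = Real.sin b := norm_orth hx hy'
  have hinneruv : (inner ℝ u v : ℝ) = (inner ℝ y y' : ℝ) - Real.cos a * Real.cos b := by
    rw [hudef, hvdef]
    simp only [inner_sub_left, inner_sub_right, real_inner_smul_left, real_inner_smul_right,
      real_inner_self_eq_norm_sq, hx]
    rw [real_inner_comm x y, ← hca, ← hcb]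
    ring
  set t0 : ℝ := ((inner ℝ y y' : ℝ) - Real.cos a * Real.cos b) / (Real.sin a * Real.sin b)
    with ht0def
  have hst : 0 < Real.sin a * Real.sin b := mul_pos hsa hsb
  have ht0 : t0 ∈ Set.Icc (-1 : ℝ) 1 := by
    have hCS := abs_real_inner_le_norm u v
    rw [hun, hvn, hinneruv] at hCS
    rw [Set.mem_Icc, ht0def]
    constructor
    · rw [le_div_iff₀ hst]; have := abs_le.1 hCS; linarith [this.1]
    · rw [div_le_iff₀ hst]; have := abs_le.1 hCS; linarith [(abs_le.1 hCS).2]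
  have hw : (inner ℝ y y' : ℝ) = Real.cos a * Real.cos b + Real.sin a * Real.sin b * t0 := by
    rw [ht0def]
    field_simp
    ring
  -- the ratio bound (a / sin a)(b / sin b) ≤ K²
  have hfa : a / Real.sin a ≤ K := by
    calc a / Real.sin a ≤ 2 * r / Real.sin (2 * r) := by
          rw [div_le_div_iff₀ hsa hs2]
          have := mul_sin_le_aux ha0.le hxy.le (by linarith)
          linarith
      _ ≤ K := f_le_K hr0 hr
  have hfb : b / Real.sin b ≤ K := by
    calc b / Real.sin b ≤ 2 * r / Real.sin (2 * r) := by
          rw [div_le_div_iff₀ hsb hs2]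
          have := mul_sin_le_aux hb0.le hxy'.le (by linarith)
          linarith
      _ ≤ K := f_le_K hr0 hr
  have hfapos : 0 < a / Real.sin a := by positivity
  have hK : a / Real.sin a * (b / Real.sin b) ≤ K ^ 2 := by
    have := mul_le_mul hfa hfb (by positivity) (by linarith)
    nlinarith [this]
  have hkey := key_ineq ha0 ha2 hb0 hb2 ht0 hK hK1
  -- identify arccos (cos a cos b + sin a sin b t0) with sphDist y y'
  have hφ : Real.arccos (Real.cos a * Real.cos b + Real.sin a * Real.sin b * t0)
      = sphDist y y' := by rw [← hw, sphDist]
  rw [hφ] at hkey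
  -- compute the norm of the difference
  have hlog1 : sphLog x y = (a / Real.sin a) • u := rfl
  have hlog2 : sphLog x y' = (b / Real.sin b) • v := rfl
  have hn1 : ‖sphLog x y‖ = a := norm_sphLog hx hy (by linarith)
  have hn2 : ‖sphLog x y'‖ = b := norm_sphLog hx hy' (by linarith)
  have hip : (inner ℝ (sphLog x y) (sphLog x y') : ℝ) = a * b * t0 := by
    rw [hlog1, hlog2, real_inner_smul_left, real_inner_smul_right, hinneruv]
    rw [ht0def]
    field_simp
  have hnd : ‖sphLog x y - sphLog x y'‖ ^ 2 = a ^ 2 + b ^ 2 - 2 * a * b * t0 := by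
    rw [norm_sub_sq_real, hn1, hn2, hip]
    ring
  have hφ2r : sphDist y y' ≤ 2 * r := hyy'.le
  have hφ0 : 0 ≤ sphDist y y' := sphDist_nonneg y y'
  have hKpos : 0 < K := by linarith
  have hsq : ‖sphLog x y - sphLog x y'‖ ^ 2 ≤ (2 * r * K) ^ 2 := by
    rw [hnd]
    calc a ^ 2 + b ^ 2 - 2 * a * b * t0 ≤ K ^ 2 * sphDist y y' ^ 2 := hkey
      _ ≤ K ^ 2 * (2 * r) ^ 2 := by
          apply mul_le_mul_of_nonneg_left _ (by positivity)
          exact pow_le_pow_left₀ hφ0 hφ2r 2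
      _ = (2 * r * K) ^ 2 := by ring
  calc ‖sphLog x y - sphLog x y'‖
      = Real.sqrt (‖sphLog x y - sphLog x y'‖ ^ 2) := (Real.sqrt_sq (norm_nonneg _)).symm
    _ ≤ Real.sqrt ((2 * r * K) ^ 2) := Real.sqrt_le_sqrt hsq
    _ = 2 * r * K := Real.sqrt_sq (by positivity)

end Sensitivity

section Main

variable {d n : ℕ}

local notation "E" => EuclideanSpace ℝ (Fin (d + 1))

lemma norm_sph (z : Sph d) : ‖(z : E)‖ = 1 := by
  have := z.2
  rwa [mem_sphere_iff_norm, sub_zero] at this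

lemma measurable_gfun (ys : Fin n → Sph d) :
    Measurable (fun z : Sph d => ‖(1 / (n : ℝ)) • ∑ i, sphLog (z : E) ((ys i : E))‖) := by
  apply Measurable.norm
  apply Measurable.fun_const_smul
  apply Finset.measurable_sum
  intro i _
  have hdist : Measurable (fun z : Sph d => sphDist (z : E) (ys i)) :=
    Real.continuous_arccos.measurable.comp
      ((continuous_subtype_val.inner continuous_const).measurable)
  apply Measurable.fun_smul
  · exact hdist.div (Real.continuous_sin.measurable.comp hdist)
  · exact measurable_const.sub ((Real.continuous_cos.measurable.comp hdist).smul
      measurable_subtype_coe)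

end Main


set_option maxHeartbeats 1600000 in
/-- ε-differential privacy of the KNG mechanism for Fréchet mean estimation on the
unit sphere (Theorems 1 and 2 combined): with `σ = (4r/(nε))(2 − 2r·cot(2r))`, the
densities proportional to `e^{−g_D/σ}` with respect to the surface measure restricted
to `B_r(p₀)` satisfy the ε-DP inequality for adjacent datasets in `B_r(p₀)`. -/
theorem sphere_kng_mean_privacy (d n : ℕ) (hd : 1 ≤ d) (hn : 1 ≤ n)
    (r ε : ℝ) (hr0 : 0 < r) (hr : r < Real.pi / 4) (hε : 0 < ε)
    (σ : ℝ)
    (hσ : σ = 4 * r / (n * ε) * (2 - 2 * r * (Real.cos (2 * r) / Real.sin (2 * r))))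
    (p₀ : Sph d) (B : Set (Sph d))
    (hB : B = {x : Sph d | sphDist (p₀ : EuclideanSpace ℝ (Fin (d + 1))) x < r})
    (μ : Measure (Sph d))
    (hμ : μ = ((volume : Measure (EuclideanSpace ℝ (Fin (d + 1)))).toSphere).restrict B)
    (xs xs' : Fin n → Sph d) (hxs : ∀ i, xs i ∈ B) (hxs' : ∀ i, xs' i ∈ B)
    (hadj : ∃ j : Fin n, xs j ≠ xs' j ∧ ∀ i : Fin n, i ≠ j → xs i = xs' i)
    (gD gD' : Sph d → ℝ)
    (hgD : gD = fun x : Sph d => ‖(1 / (n : ℝ)) • ∑ i, sphLog (x : EuclideanSpace ℝ (Fin (d + 1))) (xs i)‖)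
    (hgD' : gD' = fun x : Sph d => ‖(1 / (n : ℝ)) • ∑ i, sphLog (x : EuclideanSpace ℝ (Fin (d + 1))) (xs' i)‖)
    (S : Set (Sph d)) (hS : S ⊆ B) (hSm : MeasurableSet S) :
    (∫ x in S, Real.exp (-gD x / σ) ∂μ) / (∫ x, Real.exp (-gD x / σ) ∂μ) ≤
      Real.exp ε *
        ((∫ x in S, Real.exp (-gD' x / σ) ∂μ) / (∫ x, Real.exp (-gD' x / σ) ∂μ)) := by
  have hπ := Real.pi_pos
  set K : ℝ := 2 - 2 * r * (Real.cos (2 * r) / Real.sin (2 * r)) with hKdef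
  have hK1 : 1 ≤ K := one_le_K hr0 hr
  have hn0 : (0 : ℝ) < (n : ℝ) := by exact_mod_cast hn
  have hσpos : 0 < σ := by
    rw [hσ]
    have h1 : (0 : ℝ) < 4 * r / (↑n * ε) := by positivity
    exact mul_pos h1 (by linarith)
  -- geodesic distances from points of B to points of B are < 2r
  have htri : ∀ z w : Sph d, z ∈ B → w ∈ B → sphDist (z : EuclideanSpace ℝ (Fin (d + 1))) (w : EuclideanSpace ℝ (Fin (d + 1))) < 2 * r := by
    intro z w hz hw
    rw [hB, Set.mem_setOf_eq] at hz hw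
    have h1 : sphDist (z : EuclideanSpace ℝ (Fin (d + 1))) (w : EuclideanSpace ℝ (Fin (d + 1))) ≤
        sphDist (z : EuclideanSpace ℝ (Fin (d + 1))) (p₀ : EuclideanSpace ℝ (Fin (d + 1))) + sphDist (p₀ : EuclideanSpace ℝ (Fin (d + 1))) (w : EuclideanSpace ℝ (Fin (d + 1))) := by
      rw [sphDist, sphDist, sphDist]
      exact arccos_inner_triangle (norm_sph z) (norm_sph p₀) (norm_sph w)
    rw [sphDist_comm (z : EuclideanSpace ℝ (Fin (d + 1))) (p₀ : EuclideanSpace ℝ (Fin (d + 1)))] at h1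
    linarith
  -- the sensitivity bound
  obtain ⟨j, hjne, hjeq⟩ := hadj
  have hsens : ∀ z : Sph d, z ∈ B → |gD z - gD' z| ≤ 2 * r * K / n := by
    intro z hz
    rw [hgD, hgD']
    simp only
    have hdiff : (1 / (n : ℝ)) • ∑ i, sphLog (z : EuclideanSpace ℝ (Fin (d + 1))) ((xs i : EuclideanSpace ℝ (Fin (d + 1)))) -
        (1 / (n : ℝ)) • ∑ i, sphLog (z : EuclideanSpace ℝ (Fin (d + 1))) ((xs' i : EuclideanSpace ℝ (Fin (d + 1)))) =
        (1 / (n : ℝ)) • (sphLog (z : EuclideanSpace ℝ (Fin (d + 1))) ((xs j : EuclideanSpace ℝ (Fin (d + 1)))) - sphLog (z : EuclideanSpace ℝ (Fin (d + 1))) ((xs' j : EuclideanSpace ℝ (Fin (d + 1))))) := by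
      rw [← smul_sub, ← Finset.sum_sub_distrib]
      congr 1
      apply Finset.sum_eq_single_of_mem j (Finset.mem_univ j)
      intro i _ hij
      rw [hjeq i hij, sub_self]
    calc |‖(1 / (n : ℝ)) • ∑ i, sphLog (z : EuclideanSpace ℝ (Fin (d + 1))) ((xs i : EuclideanSpace ℝ (Fin (d + 1))))‖ -
          ‖(1 / (n : ℝ)) • ∑ i, sphLog (z : EuclideanSpace ℝ (Fin (d + 1))) ((xs' i : EuclideanSpace ℝ (Fin (d + 1))))‖|
        ≤ ‖(1 / (n : ℝ)) • ∑ i, sphLog (z : EuclideanSpace ℝ (Fin (d + 1))) ((xs i : EuclideanSpace ℝ (Fin (d + 1)))) -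
            (1 / (n : ℝ)) • ∑ i, sphLog (z : EuclideanSpace ℝ (Fin (d + 1))) ((xs' i : EuclideanSpace ℝ (Fin (d + 1))))‖ := abs_norm_sub_norm_le _ _
      _ = (1 / (n : ℝ)) * ‖sphLog (z : EuclideanSpace ℝ (Fin (d + 1))) ((xs j : EuclideanSpace ℝ (Fin (d + 1)))) - sphLog (z : EuclideanSpace ℝ (Fin (d + 1))) ((xs' j : EuclideanSpace ℝ (Fin (d + 1))))‖ := by
          rw [hdiff, norm_smul, Real.norm_eq_abs, abs_of_nonneg (by positivity)]
      _ ≤ (1 / (n : ℝ)) * (2 * r * K) := by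
          apply mul_le_mul_of_nonneg_left _ (by positivity)
          exact sphLog_sub_bound hr0 hr (norm_sph z) (norm_sph (xs j)) (norm_sph (xs' j))
            (htri z (xs j) hz (hxs j)) (htri z (xs' j) hz (hxs' j))
            (htri (xs j) (xs' j) (hxs j) (hxs' j))
      _ = 2 * r * K / n := by ring
  have hΔσ : 2 * r * K / n = σ * (ε / 2) := by
    rw [hσ]
    field_simp
    ring
  -- pointwise bounds on B
  have hpt : ∀ z : Sph d, z ∈ B →
      Real.exp (-gD z / σ) ≤ Real.exp (ε / 2) * Real.exp (-gD' z / σ) := by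
    intro z hz
    rw [← Real.exp_add]
    apply Real.exp_le_exp.2
    have h1 := (abs_le.1 (hsens z hz)).1
    rw [← sub_le_iff_le_add, div_sub_div_same, div_le_iff₀ hσpos]
    linarith [h1, hΔσ]
  have hpt' : ∀ z : Sph d, z ∈ B →
      Real.exp (-gD' z / σ) ≤ Real.exp (ε / 2) * Real.exp (-gD z / σ) := by
    intro z hz
    rw [← Real.exp_add]
    apply Real.exp_le_exp.2
    have h1 := (abs_le.1 (hsens z hz)).2
    rw [← sub_le_iff_le_add, div_sub_div_same, div_le_iff₀ hσpos]
    linarith [h1, hΔσ]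
  -- measure-theoretic setup
  have hmeasB : MeasurableSet B := by
    have hc : Continuous fun z : Sph d => sphDist (p₀ : EuclideanSpace ℝ (Fin (d + 1)))
        (z : EuclideanSpace ℝ (Fin (d + 1))) :=
      Real.continuous_arccos.comp (continuous_const.inner continuous_subtype_val)
    rw [hB]
    exact (isOpen_lt hc continuous_const).measurableSet
  haveI hfin : IsFiniteMeasure μ := by rw [hμ]; infer_instance
  have hmD : Measurable fun z : Sph d => Real.exp (-gD z / σ) := by
    rw [hgD]
    exact Real.measurable_exp.comp ((measurable_gfun xs).neg.div_const σ)
  have hmD' : Measurable fun z : Sph d => Real.exp (-gD' z / σ) := by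
    rw [hgD']
    exact Real.measurable_exp.comp ((measurable_gfun xs').neg.div_const σ)
  have hgnonneg : ∀ z : Sph d, 0 ≤ gD z := by intro z; rw [hgD]; positivity
  have hgnonneg' : ∀ z : Sph d, 0 ≤ gD' z := by intro z; rw [hgD']; positivity
  have hintD : Integrable (fun z : Sph d => Real.exp (-gD z / σ)) μ := by
    apply (integrable_const (1 : ℝ)).mono' hmD.aestronglyMeasurable
    apply Filter.Eventually.of_forall
    intro z
    rw [Real.norm_eq_abs, Real.abs_exp]
    apply Real.exp_le_one_iff.2
    have := hgnonneg z
    apply div_nonpos_of_nonpos_of_nonneg <;> linarith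
  have hintD' : Integrable (fun z : Sph d => Real.exp (-gD' z / σ)) μ := by
    apply (integrable_const (1 : ℝ)).mono' hmD'.aestronglyMeasurable
    apply Filter.Eventually.of_forall
    intro z
    rw [Real.norm_eq_abs, Real.abs_exp]
    apply Real.exp_le_one_iff.2
    have := hgnonneg' z
    apply div_nonpos_of_nonpos_of_nonneg <;> linarith
  -- integral comparisons
  have hIS : (∫ z in S, Real.exp (-gD z / σ) ∂μ) ≤
      Real.exp (ε / 2) * ∫ z in S, Real.exp (-gD' z / σ) ∂μ := by
    rw [← integral_const_mul]
    apply setIntegral_mono_on hintD.integrableOn (hintD'.const_mul _).integrableOn hSm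
    intro z hz
    exact hpt z (hS hz)
  have hIB : (∫ z, Real.exp (-gD' z / σ) ∂μ) ≤
      Real.exp (ε / 2) * ∫ z, Real.exp (-gD z / σ) ∂μ := by
    rw [← integral_const_mul]
    apply integral_mono_ae hintD' (hintD.const_mul _)
    rw [hμ]
    exact (MeasureTheory.ae_restrict_iff' hmeasB).2 (Filter.Eventually.of_forall hpt')
  -- nonnegativity of set integrals
  have hISnn : 0 ≤ ∫ z in S, Real.exp (-gD z / σ) ∂μ :=
    integral_nonneg fun z => (Real.exp_pos _).le
  have hIS'nn : 0 ≤ ∫ z in S, Real.exp (-gD' z / σ) ∂μ :=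
    integral_nonneg fun z => (Real.exp_pos _).le
  -- case: the restricted measure is zero
  by_cases h0 : μ = 0
  · rw [h0]
    simp
  -- main case: positive denominators
  have huniv : μ Set.univ ≠ 0 := fun hcontra => h0 (Measure.measure_univ_eq_zero.1 hcontra)
  have htoReal : 0 < (μ Set.univ).toReal :=
    ENNReal.toReal_pos huniv (measure_ne_top μ _)
  -- lower bounds for the denominators
  have hg2r : ∀ z : Sph d, z ∈ B → gD z ≤ 2 * r := by
    intro z hz
    rw [hgD]
    simp only
    have hbound : ∀ i : Fin n, ‖sphLog (z : EuclideanSpace ℝ (Fin (d + 1)))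
        ((xs i : EuclideanSpace ℝ (Fin (d + 1))))‖ ≤ 2 * r := by
      intro i
      rw [norm_sphLog (norm_sph z) (norm_sph (xs i)) (by linarith [htri z (xs i) hz (hxs i)])]
      exact (htri z (xs i) hz (hxs i)).le
    calc ‖(1 / (n : ℝ)) • ∑ i, sphLog (z : EuclideanSpace ℝ (Fin (d + 1)))
          ((xs i : EuclideanSpace ℝ (Fin (d + 1))))‖
        = (1 / (n : ℝ)) * ‖∑ i, sphLog (z : EuclideanSpace ℝ (Fin (d + 1)))
          ((xs i : EuclideanSpace ℝ (Fin (d + 1))))‖ := by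
          rw [norm_smul, Real.norm_eq_abs, abs_of_nonneg (by positivity)]
      _ ≤ (1 / (n : ℝ)) * ∑ i : Fin n, ‖sphLog (z : EuclideanSpace ℝ (Fin (d + 1)))
          ((xs i : EuclideanSpace ℝ (Fin (d + 1))))‖ := by
          apply mul_le_mul_of_nonneg_left (norm_sum_le _ _) (by positivity)
      _ ≤ (1 / (n : ℝ)) * ((Finset.univ : Finset (Fin n)).card • (2 * r)) := by
          apply mul_le_mul_of_nonneg_left _ (by positivity)
          exact Finset.sum_le_card_nsmul _ _ _ fun i _ => hbound i
      _ = 2 * r := by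
          simp [Finset.card_univ]
          field_simp
  have hg2r' : ∀ z : Sph d, z ∈ B → gD' z ≤ 2 * r := by
    intro z hz
    rw [hgD']
    simp only
    have hbound : ∀ i : Fin n, ‖sphLog (z : EuclideanSpace ℝ (Fin (d + 1)))
        ((xs' i : EuclideanSpace ℝ (Fin (d + 1))))‖ ≤ 2 * r := by
      intro i
      rw [norm_sphLog (norm_sph z) (norm_sph (xs' i)) (by linarith [htri z (xs' i) hz (hxs' i)])]
      exact (htri z (xs' i) hz (hxs' i)).le
    calc ‖(1 / (n : ℝ)) • ∑ i, sphLog (z : EuclideanSpace ℝ (Fin (d + 1)))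
          ((xs' i : EuclideanSpace ℝ (Fin (d + 1))))‖
        = (1 / (n : ℝ)) * ‖∑ i, sphLog (z : EuclideanSpace ℝ (Fin (d + 1)))
          ((xs' i : EuclideanSpace ℝ (Fin (d + 1))))‖ := by
          rw [norm_smul, Real.norm_eq_abs, abs_of_nonneg (by positivity)]
      _ ≤ (1 / (n : ℝ)) * ∑ i : Fin n, ‖sphLog (z : EuclideanSpace ℝ (Fin (d + 1)))
          ((xs' i : EuclideanSpace ℝ (Fin (d + 1))))‖ := by
          apply mul_le_mul_of_nonneg_left (norm_sum_le _ _) (by positivity)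
      _ ≤ (1 / (n : ℝ)) * ((Finset.univ : Finset (Fin n)).card • (2 * r)) := by
          apply mul_le_mul_of_nonneg_left _ (by positivity)
          exact Finset.sum_le_card_nsmul _ _ _ fun i _ => hbound i
      _ = 2 * r := by
          simp [Finset.card_univ]
          field_simp
  have hlowgen : ∀ (g : Sph d → ℝ), (∀ z : Sph d, z ∈ B → g z ≤ 2 * r) →
      Integrable (fun z : Sph d => Real.exp (-g z / σ)) μ →
      0 < ∫ z, Real.exp (-g z / σ) ∂μ := by
    intro g hgle hgint
    have hconst : (∫ _ : Sph d, Real.exp (-(2 * r) / σ) ∂μ) =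
        (μ Set.univ).toReal * Real.exp (-(2 * r) / σ) := by
      rw [integral_const, smul_eq_mul]
      rfl
    have hmono : (∫ _ : Sph d, Real.exp (-(2 * r) / σ) ∂μ) ≤
        ∫ z, Real.exp (-g z / σ) ∂μ := by
      apply integral_mono_ae (integrable_const _) hgint
      rw [hμ]
      apply (MeasureTheory.ae_restrict_iff' hmeasB).2
      apply Filter.Eventually.of_forall
      intro z hz
      apply Real.exp_le_exp.2
      exact (div_le_div_iff_of_pos_right hσpos).2 (by linarith [hgle z hz])
    calc (0 : ℝ) < (μ Set.univ).toReal * Real.exp (-(2 * r) / σ) :=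
          mul_pos htoReal (Real.exp_pos _)
      _ = ∫ _ : Sph d, Real.exp (-(2 * r) / σ) ∂μ := hconst.symm
      _ ≤ ∫ z, Real.exp (-g z / σ) ∂μ := hmono
  have hIBpos : 0 < ∫ z, Real.exp (-gD z / σ) ∂μ := hlowgen gD hg2r hintD
  have hIB'pos : 0 < ∫ z, Real.exp (-gD' z / σ) ∂μ := hlowgen gD' hg2r' hintD'
  -- conclude
  rw [mul_div_assoc'] -- exp ε * (a / b) = exp ε * a / b
  rw [div_le_div_iff₀ hIBpos hIB'pos]
  have hee : Real.exp (ε / 2) * Real.exp (ε / 2) = Real.exp ε := by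
    rw [← Real.exp_add]; ring_nf
  have hmul := mul_le_mul hIS hIB hIB'pos.le (mul_nonneg (Real.exp_pos (ε / 2)).le hIS'nn)
  nlinarith [hmul, hee, hIS'nn, hIBpos.le, mul_nonneg hIS'nn hIBpos.le]
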